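/- Let u⁽¹⁾,...,u⁽ⁿ⁾, v⁽¹⁾,...,v⁽ⁿ⁾ ∈ ℝ^d and define f : ℝ^d → ℝ by f(x) = (1/√2) Σ_{i=1}^n √(‖x ⊙ u⁽ⁱ⁾ - v⁽ⁱ⁾‖² + ‖x ⊙ v⁽ⁱ⁾ - u⁽ⁱ⁾‖²). If a ∈ ℝ^d has all nonnegative coordinates and a is a global minimizer of f, then f(𝟏) ≤ √2 · f(a), where 𝟏 is the all-ones vector. -/

import Mathlib

noncomputable def had {d : ℕ} (x y : EuclideanSpace ℝ (Fin d)) :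
    EuclideanSpace ℝ (Fin d) := WithLp.toLp 2 (fun k => x k * y k)

private lemma sqrt_tangent {X O : ℝ} (hX : 0 ≤ X) (hO : 0 < O) :
    Real.sqrt X ≤ Real.sqrt O + (X - O) / (2 * Real.sqrt O) := by
  have hs : 0 < Real.sqrt O := Real.sqrt_pos.2 hO
  have h2 : 2 * Real.sqrt O * Real.sqrt X ≤ O + X := by
    nlinarith [sq_nonneg (Real.sqrt O - Real.sqrt X), Real.sq_sqrt hX, Real.sq_sqrt hO.le]
  rw [← sub_le_iff_le_add', le_div_iff₀ (by positivity : (0:ℝ) < 2 * Real.sqrt O)]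
  nlinarith [Real.sq_sqrt hO.le]

private lemma coord_zero {s x y : ℝ} (hs : 0 ≤ s) (h1 : s * x - y = 0) (h2 : s * y - x = 0) :
    (x - y) ^ 2 = 0 ∧ (s - 1) ^ 2 * (x ^ 2 + y ^ 2) = 0 := by
  rcases eq_or_ne x 0 with h | h
  · subst h
    have hy : y = 0 := by linarith
    simp [hy]
  · have hx : x * (s ^ 2 - 1) = 0 := by linear_combination s * h1 + h2
    have hsq : s ^ 2 = 1 := by
      rcases mul_eq_zero.1 hx with h' | h'
      · exact absurd h' h
      · linarith
    have hs1 : s = 1 := by nlinarith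
    subst hs1
    have : x = y := by linarith
    simp [this]

theorem f_one_le_sqrt_two_f_min {d n : ℕ}
    (u v : Fin n → EuclideanSpace ℝ (Fin d))
    (f : EuclideanSpace ℝ (Fin d) → ℝ)
    (hf : ∀ x, f x = (1 / Real.sqrt 2) *
      ∑ i, Real.sqrt (‖had x (u i) - v i‖ ^ 2 + ‖had x (v i) - u i‖ ^ 2))
    (a : EuclideanSpace ℝ (Fin d)) (ha : ∀ k, 0 ≤ a k)
    (hmin : ∀ x, f a ≤ f x) :
    f (WithLp.toLp 2 (fun _ => 1)) ≤ Real.sqrt 2 * f a := by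
  classical
  have hsqrt2 : (0:ℝ) < Real.sqrt 2 := Real.sqrt_pos.2 (by norm_num)
  -- norms as coordinate sums
  have hsq : ∀ y : EuclideanSpace ℝ (Fin d), ‖y‖ ^ 2 = ∑ k, (y k) ^ 2 := by
    intro y
    rw [EuclideanSpace.norm_eq, Real.sq_sqrt (by positivity)]
    simp [sq_abs]
  have hnorm : ∀ (x : EuclideanSpace ℝ (Fin d)) (i : Fin n),
      ‖had x (u i) - v i‖ ^ 2 + ‖had x (v i) - u i‖ ^ 2
        = ∑ k, ((x k * u i k - v i k) ^ 2 + (x k * v i k - u i k) ^ 2) := by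
    intro x i
    rw [hsq, hsq, ← Finset.sum_add_distrib]
    refine Finset.sum_congr rfl fun k _ => ?_
    simp [had]
  -- the basic quantities
  set O : Fin n → ℝ := fun i => ∑ k, ((a k * u i k - v i k) ^ 2 + (a k * v i k - u i k) ^ 2)
    with hOdef
  set L : Fin n → ℝ := fun i => ∑ k, (2 * (a k - 1) *
      (u i k * (a k * u i k - v i k) + v i k * (a k * v i k - u i k))) with hLdef
  set K : Fin n → ℝ := fun i => ∑ k, ((a k - 1) ^ 2 * ((u i k) ^ 2 + (v i k) ^ 2)) with hKdef
  set q2 : Fin n → ℝ := fun i => ∑ k, (u i k - v i k) ^ 2 with hq2def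
  set m : Fin n → ℝ := fun i => ∑ k, a k * (u i k - v i k) ^ 2 with hmdef
  have hOnonneg : ∀ i, 0 ≤ O i := fun i => by
    rw [hOdef]; positivity
  have hKnonneg : ∀ i, 0 ≤ K i := fun i => by
    rw [hKdef]; positivity
  have hmnonneg : ∀ i, 0 ≤ m i := fun i => by
    rw [hmdef]
    exact Finset.sum_nonneg fun k _ => mul_nonneg (ha k) (sq_nonneg _)
  set c : Fin n → ℝ := fun i => if O i = 0 then 0 else (2 * Real.sqrt (O i))⁻¹ with hcdef
  have hcnonneg : ∀ i, 0 ≤ c i := by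
    intro i
    rw [hcdef]
    by_cases h : O i = 0 <;> simp [h] <;> positivity
  -- f-values as sums
  have hfx : ∀ x : EuclideanSpace ℝ (Fin d), Real.sqrt 2 * f x
      = ∑ i, Real.sqrt (∑ k, ((x k * u i k - v i k) ^ 2 + (x k * v i k - u i k) ^ 2)) := by
    intro x
    rw [hf, ← mul_assoc, mul_one_div, div_self hsqrt2.ne', one_mul]
    exact Finset.sum_congr rfl fun i _ => by rw [hnorm]
  have hfa : Real.sqrt 2 * f a = ∑ i, Real.sqrt (O i) := hfx a
  -- the quadratic expansion along direction a - 1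
  have hOt : ∀ (t : ℝ) (i : Fin n),
      (∑ k, (((a k + t * (a k - 1)) * u i k - v i k) ^ 2
        + ((a k + t * (a k - 1)) * v i k - u i k) ^ 2))
      = O i + t * L i + t ^ 2 * K i := by
    intro t i
    rw [hOdef, hLdef, hKdef]
    simp only
    rw [Finset.mul_sum, Finset.mul_sum, ← Finset.sum_add_distrib, ← Finset.sum_add_distrib]
    exact Finset.sum_congr rfl fun k _ => by ring
  -- degenerate terms vanish entirely
  have hzero : ∀ i, O i = 0 → q2 i = 0 ∧ L i = 0 ∧ K i = 0 := by
    intro i h0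
    have hterm : ∀ k : Fin d,
        (a k * u i k - v i k) ^ 2 + (a k * v i k - u i k) ^ 2 = 0 := by
      intro k
      have h0' : ∑ k, ((a k * u i k - v i k) ^ 2 + (a k * v i k - u i k) ^ 2) = 0 := by
        rw [← hOdef] at *; simpa [hOdef] using h0
      exact (Finset.sum_eq_zero_iff_of_nonneg (fun k _ => by positivity)).1 h0'
        k (Finset.mem_univ k)
    have hcoord : ∀ k : Fin d, (a k * u i k - v i k) = 0 ∧ (a k * v i k - u i k) = 0 := by
      intro k
      have h := hterm k
      constructor <;> nlinarith [sq_nonneg (a k * u i k - v i k), sq_nonneg (a k * v i k - u i k)]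
    refine ⟨?_, ?_, ?_⟩
    · rw [hq2def]
      refine Finset.sum_eq_zero fun k _ => ?_
      exact (coord_zero (ha k) (hcoord k).1 (hcoord k).2).1
    · rw [hLdef]
      refine Finset.sum_eq_zero fun k _ => ?_
      rw [(hcoord k).1, (hcoord k).2]; ring
    · rw [hKdef]
      refine Finset.sum_eq_zero fun k _ => ?_
      exact (coord_zero (ha k) (hcoord k).1 (hcoord k).2).2
  -- tangent bound along the curve
  have hbound1 : ∀ (t : ℝ), 0 ≤ t → ∀ i,
      Real.sqrt (O i + t * L i + t ^ 2 * K i)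
        ≤ Real.sqrt (O i) + c i * (t * L i + t ^ 2 * K i) := by
    intro t ht i
    rcases eq_or_lt_of_le (hOnonneg i) with h0 | hpos
    · obtain ⟨hq, hL0, hK0⟩ := hzero i h0.symm
      simp [← h0, hL0, hK0]
    · have hX : 0 ≤ O i + t * L i + t ^ 2 * K i := by
        rw [← hOt t i]; positivity
      have htan := sqrt_tangent hX hpos
      have hchere : c i = (2 * Real.sqrt (O i))⁻¹ := by
        rw [hcdef]; simp [hpos.ne']
      rw [hchere]
      have heq : (O i + t * L i + t ^ 2 * K i - O i) / (2 * Real.sqrt (O i))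
          = (2 * Real.sqrt (O i))⁻¹ * (t * L i + t ^ 2 * K i) := by
        ring
      linarith [heq ▸ htan]
  -- tangent bound for q2
  have hbound2 : ∀ i, Real.sqrt (q2 i) ≤ Real.sqrt (O i) + c i * (q2 i - O i) := by
    intro i
    rcases eq_or_lt_of_le (hOnonneg i) with h0 | hpos
    · obtain ⟨hq, -, -⟩ := hzero i h0.symm
      simp [← h0, hq]
    · have hq2nn : 0 ≤ q2 i := by rw [hq2def]; positivity
      have htan := sqrt_tangent hq2nn hpos
      have hchere : c i = (2 * Real.sqrt (O i))⁻¹ := by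
        rw [hcdef]; simp [hpos.ne']
      rw [hchere]
      have heq : (q2 i - O i) / (2 * Real.sqrt (O i))
          = (2 * Real.sqrt (O i))⁻¹ * (q2 i - O i) := by
        ring
      linarith [heq ▸ htan]
  set S1 : ℝ := ∑ i, c i * L i with hS1def
  set S2 : ℝ := ∑ i, c i * K i with hS2def
  have hS2nonneg : 0 ≤ S2 := by
    rw [hS2def]
    exact Finset.sum_nonneg fun i _ => mul_nonneg (hcnonneg i) (hKnonneg i)
  -- optimality condition
  have hkey : ∀ t : ℝ, 0 < t → 0 ≤ t * S1 + t ^ 2 * S2 := by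
    intro t ht
    have hmin' := hmin (WithLp.toLp 2 (fun k => a k + t * (a k - 1)))
    have e2 : Real.sqrt 2 * f (WithLp.toLp 2 (fun k => a k + t * (a k - 1)))
        = ∑ i, Real.sqrt (O i + t * L i + t ^ 2 * K i) := by
      rw [hfx]
      exact Finset.sum_congr rfl fun i _ => congrArg Real.sqrt (hOt t i)
    have h2 : (∑ i, Real.sqrt (O i)) ≤ ∑ i, Real.sqrt (O i + t * L i + t ^ 2 * K i) := by
      rw [← hfa, ← e2]
      exact mul_le_mul_of_nonneg_left hmin' hsqrt2.le
    have h3 : (∑ i, Real.sqrt (O i + t * L i + t ^ 2 * K i))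
        ≤ ∑ i, (Real.sqrt (O i) + c i * (t * L i + t ^ 2 * K i)) :=
      Finset.sum_le_sum fun i _ => hbound1 t ht.le i
    have h4 : ∑ i, (Real.sqrt (O i) + c i * (t * L i + t ^ 2 * K i))
        = (∑ i, Real.sqrt (O i)) + (t * S1 + t ^ 2 * S2) := by
      rw [hS1def, hS2def, Finset.mul_sum, Finset.mul_sum, ← Finset.sum_add_distrib,
        ← Finset.sum_add_distrib]
      exact Finset.sum_congr rfl fun i _ => by ring
    rw [h4] at h3
    linarith
  have hS1nonneg : 0 ≤ S1 := by
    by_contra hneg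
    push_neg at hneg
    have ht : 0 < -S1 / (2 * (S2 + 1)) :=
      div_pos (by linarith) (by linarith)
    have hk := hkey _ ht
    set t := -S1 / (2 * (S2 + 1)) with htdef
    have h5 : 0 ≤ S1 + t * S2 := by nlinarith
    have h6 : t * (S2 + 1) = -S1 / 2 := by
      rw [htdef]; field_simp
    nlinarith
  -- the key identity  q2 - O = -L/2 - m
  have hTid : ∀ i, q2 i - O i = -(L i / 2) - m i := by
    intro i
    have : q2 i - O i + L i / 2 + m i = 0 := by
      rw [hq2def, hOdef, hLdef, hmdef]
      simp only
      rw [Finset.sum_div, ← Finset.sum_sub_distrib, ← Finset.sum_add_distrib,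
        ← Finset.sum_add_distrib]
      exact Finset.sum_eq_zero fun k _ => by ring
    linarith
  -- main inequality
  have hmain : (∑ i, Real.sqrt (q2 i)) ≤ ∑ i, Real.sqrt (O i) := by
    have h1 : (∑ i, Real.sqrt (q2 i)) ≤ ∑ i, (Real.sqrt (O i) + c i * (q2 i - O i)) :=
      Finset.sum_le_sum fun i _ => hbound2 i
    have e : (∑ i, c i * (q2 i - O i)) + S1 / 2 + ∑ i, c i * m i = 0 := by
      rw [hS1def, Finset.sum_div, ← Finset.sum_add_distrib, ← Finset.sum_add_distrib]
      exact Finset.sum_eq_zero fun i _ => by linear_combination (c i) * (hTid i)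
    have h3 : 0 ≤ ∑ i, c i * m i :=
      Finset.sum_nonneg fun i _ => mul_nonneg (hcnonneg i) (hmnonneg i)
    have h2 : ∑ i, (Real.sqrt (O i) + c i * (q2 i - O i))
        = (∑ i, Real.sqrt (O i)) + ∑ i, c i * (q2 i - O i) := Finset.sum_add_distrib
    rw [h2] at h1
    linarith
  -- identify f(1)
  have hf1 : Real.sqrt 2 * f (WithLp.toLp 2 (fun _ => 1)) = Real.sqrt 2 * ∑ i, Real.sqrt (q2 i) := by
    rw [hfx, Finset.mul_sum]
    refine Finset.sum_congr rfl fun i _ => ?_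
    show Real.sqrt (∑ k, ((1 * u i k - v i k) ^ 2 + (1 * v i k - u i k) ^ 2))
        = Real.sqrt 2 * Real.sqrt (q2 i)
    rw [show (∑ k, ((1 * u i k - v i k) ^ 2 + (1 * v i k - u i k) ^ 2)) = 2 * q2 i by
      simp only [hq2def]
      rw [Finset.mul_sum]
      exact Finset.sum_congr rfl fun k _ => by ring]
    exact Real.sqrt_mul (by norm_num) (q2 i)
  have hf1' : f (WithLp.toLp 2 (fun _ => 1)) = ∑ i, Real.sqrt (q2 i) :=
    mul_left_cancel₀ hsqrt2.ne' hf1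
  rw [hf1']
  calc (∑ i, Real.sqrt (q2 i)) ≤ ∑ i, Real.sqrt (O i) := hmain
    _ = Real.sqrt 2 * f a := hfa.symm
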